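/- Let A be a finite dimensional k-algebra, α : A⊗A → A* a Hochschild 2-cocycle, and c ∈ Z(A). Suppose there exist α' ∈ (A^{⊗3})*, h' ∈ A*, and β ∈ (A^{⊗2})* such that b₃*(α') = 0, α'∘B₁ + h'∘b₁ = 0, and α̃ ∘ i_c = α' + β∘b₂. Then with h := h' + β∘B₀ + α(1⊗1)·c ∈ A*, one has α(a⊗b)(c) − α(b⊗a)(c) + h(ab − ba) = 0 for all a,b ∈ A. -/

import Mathlib

open TensorProduct

namespace HochschildScaffold

variable (k : Type*) [Field k] (A : Type*) [Ring A] [Algebra k A]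

/-- `Tp k A n` is the `n`-fold tensor power `A^{⊗n}` over `k`. -/
abbrev Tp (n : ℕ) : Type _ := ⨂[k] (_ : Fin n), A

/-- `A^{⊗1} ≃ A`. -/
noncomputable def single : Tp k A 1 ≃ₗ[k] A :=
  PiTensorProduct.subsingletonEquiv (0 : Fin 1)

/-- Attach a tensor factor at the front: `A ⊗ A^{⊗n} ≃ A^{⊗(n+1)}`. -/
noncomputable def toFront (n : ℕ) : (A ⊗[k] Tp k A n) ≃ₗ[k] Tp k A (n + 1) :=
  (TensorProduct.congr (single k A).symm (LinearEquiv.refl k (Tp k A n))) ≪≫ₗ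
    (PiTensorProduct.tmulEquiv k A) ≪≫ₗ
      (PiTensorProduct.reindex k (fun _ => A)
        ((finSumFinEquiv : Fin 1 ⊕ Fin n ≃ Fin (1 + n)).trans (finCongr (Nat.add_comm 1 n))))

/-- Attach a tensor factor at the back: `A^{⊗n} ⊗ A ≃ A^{⊗(n+1)}`. -/
noncomputable def toBack (n : ℕ) : (Tp k A n ⊗[k] A) ≃ₗ[k] Tp k A (n + 1) :=
  (TensorProduct.congr (LinearEquiv.refl k (Tp k A n)) (single k A).symm) ≪≫ₗ
    (PiTensorProduct.tmulEquiv k A) ≪≫ₗ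
      (PiTensorProduct.reindex k (fun _ => A) (finSumFinEquiv : Fin n ⊕ Fin 1 ≃ Fin (n + 1)))

/-- Multiply the first two tensor factors: `a₀ ⊗ a₁ ⊗ ⋯ ↦ (a₀a₁) ⊗ ⋯`. -/
noncomputable def mulFront (n : ℕ) : Tp k A (n + 2) →ₗ[k] Tp k A (n + 1) :=
  (toFront k A n).toLinearMap ∘ₗ
    (LinearMap.rTensor (Tp k A n) (LinearMap.mul' k A)) ∘ₗ
      (TensorProduct.assoc k A A (Tp k A n)).symm.toLinearMap ∘ₗ
        (LinearMap.lTensor A (toFront k A n).symm.toLinearMap) ∘ₗ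
          (toFront k A (n + 1)).symm.toLinearMap

/-- Cyclic rotation `(a₀,…,a_{n-1}) ↦ (a_{n-1}, a₀, …, a_{n-2})` on `A^{⊗n}`. -/
noncomputable def rotR (n : ℕ) : Tp k A n ≃ₗ[k] Tp k A n :=
  PiTensorProduct.reindex k (fun _ => A) (finRotate n)

/-- The `j`-th (non-cyclic) face map `A^{⊗(m+1)} → A^{⊗m}`, multiplying the
`j`-th and `(j+1)`-st tensor factors: `a₀⊗⋯⊗aₘ ↦ a₀⊗⋯⊗aⱼaⱼ₊₁⊗⋯⊗aₘ`. -/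
noncomputable def nface : (m : ℕ) → Fin m → (Tp k A (m + 1) →ₗ[k] Tp k A m)
  | m + 1, j =>
      (PiTensorProduct.reindex k (fun _ => A) ((finRotate (m + 1)) ^ (j : ℕ))).toLinearMap ∘ₗ
        (mulFront k A m) ∘ₗ
          (PiTensorProduct.reindex k (fun _ => A) (((finRotate (m + 2)) ^ (j : ℕ))⁻¹)).toLinearMap

/-- The Hochschild boundary `b_{n+1} : A^{⊗(n+2)} → A^{⊗(n+1)}`, i.e.
`b(a₀⊗⋯⊗a_{n+1}) = Σ_{i=0}^{n} (-1)^i a₀⊗⋯⊗aᵢaᵢ₊₁⊗⋯⊗a_{n+1}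
  + (-1)^{n+1} a_{n+1}a₀⊗a₁⊗⋯⊗aₙ`. -/
noncomputable def hb (n : ℕ) : Tp k A (n + 2) →ₗ[k] Tp k A (n + 1) :=
  (∑ i : Fin (n + 1), ((-1 : k) ^ (i : ℕ)) • nface k A (n + 1) i)
    + ((-1 : k) ^ (n + 1)) • (mulFront k A n ∘ₗ (rotR k A (n + 2)).toLinearMap)

/-- Insert a `1` in front: `a₀⊗⋯⊗a_{n-1} ↦ 1⊗a₀⊗⋯⊗a_{n-1}`. -/
noncomputable def ins0 (n : ℕ) : Tp k A n →ₗ[k] Tp k A (n + 1) :=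
  (toFront k A n).toLinearMap ∘ₗ (TensorProduct.mk k A (Tp k A n) 1)

/-- Insert a `1` in the second slot: `a₀⊗a₁⊗⋯ ↦ a₀⊗1⊗a₁⊗⋯`. -/
noncomputable def ins1 (n : ℕ) : Tp k A (n + 1) →ₗ[k] Tp k A (n + 2) :=
  (rotR k A (n + 2)).toLinearMap ∘ₗ (ins0 k A (n + 1)) ∘ₗ (rotR k A (n + 1)).symm.toLinearMap

/-- The Connes boundary operator `B_n : A^{⊗(n+1)} → A^{⊗(n+2)}`, i.e.
`B(a₀⊗⋯⊗aₙ) = Σ_{i=0}^n (-1)^{ni} (1⊗aᵢ⊗⋯⊗aₙ⊗a₀⊗⋯⊗aᵢ₋₁ − aᵢ⊗1⊗aᵢ₊₁⊗⋯⊗aₙ⊗a₀⊗⋯⊗aᵢ₋₁)`. -/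
noncomputable def hB (n : ℕ) : Tp k A (n + 1) →ₗ[k] Tp k A (n + 2) :=
  ∑ i : Fin (n + 1), ((-1 : k) ^ (n * (i : ℕ))) •
    ((ins0 k A (n + 1) - ins1 k A n) ∘ₗ
      (PiTensorProduct.reindex k (fun _ => A) (((finRotate (n + 1)) ^ (i : ℕ))⁻¹)).toLinearMap)

/-- Contraction by a degree-0 cochain `c ∈ A`:
`i_c(a₀⊗a₁⊗⋯⊗aₙ) = a₀c⊗a₁⊗⋯⊗aₙ`. -/
noncomputable def iC (c : A) (n : ℕ) : Tp k A (n + 1) →ₗ[k] Tp k A (n + 1) :=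
  (toFront k A n).toLinearMap ∘ₗ
    (LinearMap.rTensor (Tp k A n) (LinearMap.mulRight k c)) ∘ₗ
      (toFront k A n).symm.toLinearMap

/-- Split in the middle: `A^{⊗(m+n)} ≃ A^{⊗m} ⊗ A^{⊗n}`. -/
noncomputable def splitMid (m n : ℕ) : Tp k A (m + n) ≃ₗ[k] (Tp k A m ⊗[k] Tp k A n) :=
  (PiTensorProduct.reindex k (fun _ => A)
      (finSumFinEquiv : Fin m ⊕ Fin n ≃ Fin (m + n)).symm) ≪≫ₗ
    (PiTensorProduct.tmulEquiv k A).symm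

/-- Contraction by an `m`-cochain `β : A^{⊗m} → A`:
`i_β(a₀⊗a₁⊗⋯⊗aₙ) = (a₀·β(a₁⊗⋯⊗aₘ)) ⊗ a_{m+1} ⊗ ⋯ ⊗ aₙ`. -/
noncomputable def iContr {m : ℕ} (β : Tp k A m →ₗ[k] A) (n : ℕ) :
    Tp k A (m + n + 1) →ₗ[k] Tp k A (n + 1) :=
  (toFront k A n).toLinearMap ∘ₗ
    (LinearMap.rTensor (Tp k A n) (LinearMap.mul' k A)) ∘ₗ
      (TensorProduct.assoc k A A (Tp k A n)).symm.toLinearMap ∘ₗ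
        (LinearMap.lTensor A
          ((LinearMap.rTensor (Tp k A n) β) ∘ₗ (splitMid k A m n).toLinearMap)) ∘ₗ
          (toFront k A (m + n)).symm.toLinearMap

/-- The Hochschild coboundary `δ^m : Hom(A^{⊗m}, A) → Hom(A^{⊗(m+1)}, A)`:
`(δβ)(a₁⊗⋯⊗a_{m+1}) = a₁β(a₂⊗⋯) + Σ_{i=1}^m (-1)^i β(⋯⊗aᵢaᵢ₊₁⊗⋯)
  + (-1)^{m+1} β(a₁⊗⋯⊗aₘ)a_{m+1}`. -/
noncomputable def hdelta (m : ℕ) (β : Tp k A m →ₗ[k] A) : Tp k A (m + 1) →ₗ[k] A :=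
  (TensorProduct.lift ((LinearMap.mul k A).compl₂ β) ∘ₗ (toFront k A m).symm.toLinearMap)
    + ∑ j : Fin m, ((-1 : k) ^ ((j : ℕ) + 1)) • (β ∘ₗ nface k A m j)
    + ((-1 : k) ^ (m + 1)) •
        (TensorProduct.lift ((LinearMap.mul k A) ∘ₗ β) ∘ₗ (toBack k A m).symm.toLinearMap)

/-- Left action of `A` on `A* = Hom_k(A,k)`: `(a·g)(x) = g(xa)`. -/
noncomputable def la : A →ₗ[k] Module.Dual k A →ₗ[k] Module.Dual k A :=
  LinearMap.mk₂ k (fun a g => g ∘ₗ LinearMap.mulRight k a)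
    (by intro a a' g; ext x; simp [mul_add])
    (by intro c a g; ext x; simp)
    (by intro a g g'; ext x; simp)
    (by intro c a g; ext x; simp)

/-- Right action of `A` on `A* = Hom_k(A,k)`: `(f·b)(x) = f(bx)`. -/
noncomputable def ra : Module.Dual k A →ₗ[k] A →ₗ[k] Module.Dual k A :=
  LinearMap.mk₂ k (fun g b => g ∘ₗ LinearMap.mulLeft k b)
    (by intro g g' b; ext x; simp)
    (by intro c g b; ext x; simp)
    (by intro g b b'; ext x; simp [add_mul])
    (by intro c g b; ext x; simp)

/-- The Hochschild coboundary `δ^m : Hom(A^{⊗m}, A^*) → Hom(A^{⊗(m+1)}, A^*)`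
for cochains with values in the dual bimodule `A^*`. -/
noncomputable def hdeltaD (m : ℕ) (β : Tp k A m →ₗ[k] Module.Dual k A) :
    Tp k A (m + 1) →ₗ[k] Module.Dual k A :=
  (TensorProduct.lift ((la k A).compl₂ β) ∘ₗ (toFront k A m).symm.toLinearMap)
    + ∑ j : Fin m, ((-1 : k) ^ ((j : ℕ) + 1)) • (β ∘ₗ nface k A m j)
    + ((-1 : k) ^ (m + 1)) •
        (TensorProduct.lift ((ra k A) ∘ₗ β) ∘ₗ (toBack k A m).symm.toLinearMap)

/-- The canonical adjunction `(A^{⊗(n+1)})^* → Hom_k(A^{⊗n}, A^*)`,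
`φ ↦ ((a₁⊗⋯⊗aₙ) ↦ (a₀ ↦ φ(a₀⊗a₁⊗⋯⊗aₙ)))`. -/
noncomputable def adj (n : ℕ) (φ : Module.Dual k (Tp k A (n + 1))) :
    Tp k A n →ₗ[k] Module.Dual k A :=
  (TensorProduct.curry (φ ∘ₗ (toFront k A n).toLinearMap)).flip

/-- `A^{⊗3} ≃ A ⊗ (A ⊗ A)`. -/
noncomputable def triple : Tp k A 3 ≃ₗ[k] (A ⊗[k] (A ⊗[k] A)) :=
  (toFront k A 2).symm ≪≫ₗ
    TensorProduct.congr (LinearEquiv.refl k A)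
      ((toFront k A 1).symm ≪≫ₗ TensorProduct.congr (LinearEquiv.refl k A) (single k A))

/-- The adjoint `α̃ ∈ (A^{⊗3})^*` of a 2-cochain `α : A ⊗ A → A^*`,
`α̃(a⊗b⊗d) := α(b⊗d)(a)`. -/
noncomputable def adjCochain (α : A →ₗ[k] A →ₗ[k] Module.Dual k A) :
    Module.Dual k (Tp k A 3) :=
  (TensorProduct.lift
      ((TensorProduct.lift.equiv (RingHom.id k) A A k).toLinearMap ∘ₗ (LinearMap.lflip.toLinearMap ∘ₗ α).flip)) ∘ₗ
    (triple k A).toLinearMap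

variable {k} {A}
open PiTensorProduct

@[simp] theorem single_tprod (f : Fin 1 → A) : single k A (PiTensorProduct.tprod k f) = f 0 :=
  PiTensorProduct.subsingletonEquiv_apply_tprod 0 f

@[simp] theorem single_symm_apply (a : A) :
    (single k A).symm a = PiTensorProduct.tprod k (fun _ : Fin 1 => a) := by
  apply (single k A).injective; simp

theorem toFront_tprod (n : ℕ) (a : A) (f : Fin n → A) :
    toFront k A n (a ⊗ₜ[k] PiTensorProduct.tprod k f) = PiTensorProduct.tprod k (Fin.cons a f) := by
  simp only [toFront, LinearEquiv.trans_apply, TensorProduct.congr_tmul,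
    LinearEquiv.refl_apply, single_symm_apply]
  rw [PiTensorProduct.tmulEquiv_apply (R := k) (M := A) (fun _ : Fin 1 => a) f]
  rw [PiTensorProduct.reindex_tprod]
  congr 1
  funext i
  refine Fin.cases ?_ (fun j => ?_) i
  · rfl
  · show Sum.elim (fun _ : Fin 1 => a) f
      ((finSumFinEquiv.trans (finCongr (Nat.add_comm 1 n))).symm j.succ) = f j
    have : (finCongr (Nat.add_comm 1 n)).symm j.succ = Fin.natAdd 1 j := by
      ext; simp [Fin.natAdd]; omega
    rw [Equiv.symm_trans_apply, this, finSumFinEquiv_symm_apply_natAdd]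
    simp

theorem toFront_symm_tprod (n : ℕ) (f : Fin (n + 1) → A) :
    (toFront k A n).symm (PiTensorProduct.tprod k f) = f 0 ⊗ₜ[k] PiTensorProduct.tprod k (Fin.tail f) := by
  rw [LinearEquiv.symm_apply_eq, toFront_tprod, Fin.cons_self_tail]

theorem mulFront_tprod (n : ℕ) (f : Fin (n + 2) → A) :
    mulFront k A n (PiTensorProduct.tprod k f) =
      PiTensorProduct.tprod k (Fin.cons (f 0 * f 1) (fun i => f i.succ.succ)) := by
  simp only [mulFront, LinearMap.coe_comp, Function.comp_apply, LinearEquiv.coe_coe,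
    toFront_symm_tprod, LinearMap.lTensor_tmul, TensorProduct.assoc_symm_tmul,
    LinearMap.rTensor_tmul, LinearMap.mul'_apply, toFront_tprod]
  rfl

theorem rotR_tprod (n : ℕ) (f : Fin n → A) :
    rotR k A n (PiTensorProduct.tprod k f) = PiTensorProduct.tprod k (fun i => f ((finRotate n).symm i)) := by
  simp [rotR]

theorem ins0_tprod (n : ℕ) (f : Fin n → A) :
    ins0 k A n (PiTensorProduct.tprod k f) = PiTensorProduct.tprod k (Fin.cons 1 f) := by
  simp [ins0, toFront_tprod]

theorem tprod_congr {n : ℕ} {f g : Fin n → A} (h : ∀ i, f i = g i) :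
    PiTensorProduct.tprod k f = PiTensorProduct.tprod k g := congrArg _ (funext h)

theorem nface10 (a b : A) : nface k A 1 0 (PiTensorProduct.tprod k ![a,b]) = PiTensorProduct.tprod k ![a*b] := by
  show ((PiTensorProduct.reindex k (fun _ => A) ((finRotate 1) ^ ((0:Fin 1) : ℕ))).toLinearMap ∘ₗ
        (mulFront k A 0) ∘ₗ
          (PiTensorProduct.reindex k (fun _ => A) (((finRotate 2) ^ ((0:Fin 1) : ℕ))⁻¹)).toLinearMap) (PiTensorProduct.tprod k ![a,b]) = _
  simp only [LinearMap.coe_comp, Function.comp_apply, LinearEquiv.coe_coe,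
    PiTensorProduct.reindex_tprod, mulFront_tprod]
  refine tprod_congr (fun i => ?_)
  have e1 : ∀ x : Fin 2, ((finRotate 2 ^ ((0:Fin 1):ℕ))⁻¹).symm x = ![(0:Fin 2),1] x := by decide
  have e2 : ∀ x : Fin 1, ((finRotate 1 ^ ((0:Fin 1):ℕ))).symm x = ![(0:Fin 1)] x := by decide
  fin_cases i <;> simp [e1, e2, Equiv.Perm.one_symm]

theorem nface20 (a b d : A) : nface k A 2 0 (PiTensorProduct.tprod k ![a,b,d]) = PiTensorProduct.tprod k ![a*b,d] := by
  show ((PiTensorProduct.reindex k (fun _ => A) ((finRotate 2) ^ ((0:Fin 2) : ℕ))).toLinearMap ∘ₗ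
        (mulFront k A 1) ∘ₗ
          (PiTensorProduct.reindex k (fun _ => A) (((finRotate 3) ^ ((0:Fin 2) : ℕ))⁻¹)).toLinearMap) (PiTensorProduct.tprod k ![a,b,d]) = _
  simp only [LinearMap.coe_comp, Function.comp_apply, LinearEquiv.coe_coe,
    PiTensorProduct.reindex_tprod, mulFront_tprod]
  refine tprod_congr (fun i => ?_)
  have e1 : ∀ x : Fin 3, ((finRotate 3 ^ ((0:Fin 2):ℕ))⁻¹).symm x = ![(0:Fin 3),1,2] x := by decide
  have e2 : ∀ x : Fin 2, ((finRotate 2 ^ ((0:Fin 2):ℕ))).symm x = ![(0:Fin 2),1] x := by decide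
  fin_cases i <;> simp [e1, e2, Equiv.Perm.one_symm]

theorem nface21 (a b d : A) : nface k A 2 1 (PiTensorProduct.tprod k ![a,b,d]) = PiTensorProduct.tprod k ![a,b*d] := by
  show ((PiTensorProduct.reindex k (fun _ => A) ((finRotate 2) ^ ((1:Fin 2) : ℕ))).toLinearMap ∘ₗ
        (mulFront k A 1) ∘ₗ
          (PiTensorProduct.reindex k (fun _ => A) (((finRotate 3) ^ ((1:Fin 2) : ℕ))⁻¹)).toLinearMap) (PiTensorProduct.tprod k ![a,b,d]) = _
  simp only [LinearMap.coe_comp, Function.comp_apply, LinearEquiv.coe_coe,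
    PiTensorProduct.reindex_tprod, mulFront_tprod]
  refine tprod_congr (fun i => ?_)
  have e1 : ∀ x : Fin 3, ((finRotate 3 ^ ((1:Fin 2):ℕ))⁻¹).symm x = ![(1:Fin 3),2,0] x := by decide
  have e1' : ∀ x : Fin 3, ((finRotate 3)⁻¹).symm x = ![(1:Fin 3),2,0] x := by decide
  have e2 : ∀ x : Fin 2, ((finRotate 2 ^ ((1:Fin 2):ℕ))).symm x = ![(1:Fin 2),0] x := by decide
  have e2' : ∀ x : Fin 2, (Equiv.symm (finRotate 2)) x = ![(1:Fin 2),0] x := by decide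
  fin_cases i <;> simp [e1, e1', e2, e2']

theorem rotR2_tprod (a b : A) : rotR k A 2 (PiTensorProduct.tprod k ![a,b]) = PiTensorProduct.tprod k ![b,a] := by
  rw [rotR_tprod]
  refine tprod_congr fun i => ?_
  have e : ∀ x : Fin 2, (finRotate 2).symm x = ![(1:Fin 2),0] x := by decide
  fin_cases i <;> simp [e]

theorem rotR2_symm_tprod (a b : A) : (rotR k A 2).symm (PiTensorProduct.tprod k ![a,b]) = PiTensorProduct.tprod k ![b,a] := by
  rw [LinearEquiv.symm_apply_eq, rotR2_tprod]

theorem rotR1_symm_tprod (a : A) : (rotR k A 1).symm (PiTensorProduct.tprod k ![a]) = PiTensorProduct.tprod k ![a] := by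
  rw [LinearEquiv.symm_apply_eq, rotR_tprod]
  refine tprod_congr fun i => ?_
  have e : ∀ x : Fin 1, (finRotate 1).symm x = ![(0:Fin 1)] x := by decide
  fin_cases i <;> simp [e]

theorem rotR3_tprod (a b d : A) : rotR k A 3 (PiTensorProduct.tprod k ![a,b,d]) = PiTensorProduct.tprod k ![d,a,b] := by
  rw [rotR_tprod]
  refine tprod_congr fun i => ?_
  have e : ∀ x : Fin 3, (finRotate 3).symm x = ![(2:Fin 3),0,1] x := by decide
  fin_cases i <;> simp [e]

theorem hb0_tprod (a b : A) :
    hb k A 0 (PiTensorProduct.tprod k ![a,b]) = PiTensorProduct.tprod k ![a*b] - PiTensorProduct.tprod k ![b*a] := by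
  have hs : ∀ g : Fin (0+1) → (Tp k A (0+2) →ₗ[k] Tp k A (0+1)), ∑ i, g i = g 0 :=
    fun g => Fin.sum_univ_one g
  simp only [hb, hs, LinearMap.add_apply, LinearMap.smul_apply, LinearMap.coe_comp,
    Function.comp_apply, LinearEquiv.coe_coe]
  rw [show ((0 : Fin 1) : ℕ) = 0 from rfl, pow_zero, one_smul,
    show ((-1:k)^(0+1)) = -1 from by norm_num, neg_smul, one_smul]
  have h1 : nface k A (0+1) 0 (PiTensorProduct.tprod k ![a,b]) = PiTensorProduct.tprod k ![a*b] := nface10 a b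
  have h2 : mulFront k A 0 (rotR k A (0+2) (PiTensorProduct.tprod k ![a,b])) = PiTensorProduct.tprod k ![b*a] := by
    rw [show (rotR k A (0+2) : Tp k A 2 ≃ₗ[k] Tp k A 2) = rotR k A 2 from rfl, rotR2_tprod,
      mulFront_tprod]
    exact tprod_congr fun i => by fin_cases i; rfl
  rw [h1, h2, sub_eq_add_neg]

theorem hb1_tprod (a b d : A) :
    hb k A 1 (PiTensorProduct.tprod k ![a,b,d]) =
      PiTensorProduct.tprod k ![a*b,d] - PiTensorProduct.tprod k ![a,b*d] + PiTensorProduct.tprod k ![d*a,b] := by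
  have hs : ∀ g : Fin (1+1) → (Tp k A (1+2) →ₗ[k] Tp k A (1+1)), ∑ i, g i = g 0 + g 1 :=
    fun g => Fin.sum_univ_two g
  simp only [hb, hs, LinearMap.add_apply, LinearMap.smul_apply, LinearMap.coe_comp,
    Function.comp_apply, LinearEquiv.coe_coe]
  rw [show ((0 : Fin 2) : ℕ) = 0 from rfl, show ((1 : Fin 2) : ℕ) = 1 from rfl,
    pow_zero, one_smul, pow_one, neg_smul, one_smul,
    show ((-1:k)^(1+1)) = 1 from by norm_num, one_smul]
  have h1 : nface k A (1+1) 0 (PiTensorProduct.tprod k ![a,b,d]) = PiTensorProduct.tprod k ![a*b,d] := nface20 a b d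
  have h2 : nface k A (1+1) 1 (PiTensorProduct.tprod k ![a,b,d]) = PiTensorProduct.tprod k ![a,b*d] := nface21 a b d
  have h3 : mulFront k A 1 (rotR k A (1+2) (PiTensorProduct.tprod k ![a,b,d])) = PiTensorProduct.tprod k ![d*a,b] := by
    rw [show (rotR k A (1+2) : Tp k A 3 ≃ₗ[k] Tp k A 3) = rotR k A 3 from rfl, rotR3_tprod,
      mulFront_tprod]
    exact tprod_congr fun i => by fin_cases i <;> rfl
  rw [h1, h2, h3, sub_eq_add_neg]

theorem ins1_0_tprod (a : A) : ins1 k A 0 (PiTensorProduct.tprod k ![a]) = PiTensorProduct.tprod k ![a,1] := by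
  show rotR k A 2 ((ins0 k A 1) ((rotR k A 1).symm (PiTensorProduct.tprod k ![a]))) = _
  rw [rotR1_symm_tprod, ins0_tprod,
    show (Fin.cons 1 ![a] : Fin 2 → A) = ![(1:A),a] from rfl, rotR2_tprod]

theorem ins1_1_tprod (a b : A) : ins1 k A 1 (PiTensorProduct.tprod k ![a,b]) = PiTensorProduct.tprod k ![a,1,b] := by
  show rotR k A 3 ((ins0 k A 2) ((rotR k A 2).symm (PiTensorProduct.tprod k ![a,b]))) = _
  rw [rotR2_symm_tprod, ins0_tprod,
    show (Fin.cons 1 ![b,a] : Fin 3 → A) = ![(1:A),b,a] from rfl, rotR3_tprod]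

theorem hB0_tprod (f : Fin 1 → A) :
    hB k A 0 (PiTensorProduct.tprod k f) = PiTensorProduct.tprod k ![1, f 0] - PiTensorProduct.tprod k ![f 0, 1] := by
  have hf : PiTensorProduct.tprod k f = PiTensorProduct.tprod k ![f 0] := tprod_congr fun i => by fin_cases i; rfl
  rw [hf]
  have hs : ∀ g : Fin (0+1) → (Tp k A (0+1) →ₗ[k] Tp k A (0+2)), ∑ i, g i = g 0 :=
    fun g => Fin.sum_univ_one g
  simp only [hB, hs, LinearMap.smul_apply, LinearMap.coe_comp, Function.comp_apply,
    LinearEquiv.coe_coe, LinearMap.sub_apply, PiTensorProduct.reindex_tprod]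
  rw [show (0 * ((0 : Fin 1) : ℕ)) = 0 from rfl, pow_zero, one_smul]
  have h0 : PiTensorProduct.tprod k (fun i => ![f 0] (((finRotate (0+1) ^ ((0:Fin 1):ℕ))⁻¹).symm i)) = PiTensorProduct.tprod k ![f 0] := by
    refine tprod_congr fun i => ?_
    have e : ∀ x : Fin 1, ((finRotate (0+1) ^ ((0:Fin 1):ℕ))⁻¹).symm x = ![(0:Fin 1)] x := by decide
    fin_cases i <;> simp [e]
  rw [h0, show (ins0 k A (0+1) : Tp k A 1 →ₗ[k] Tp k A 2) = ins0 k A 1 from rfl,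
    ins0_tprod, ins1_0_tprod, show (Fin.cons 1 ![f 0] : Fin 2 → A) = ![(1:A), f 0] from rfl]

theorem hB1_tprod (a b : A) :
    hB k A 1 (PiTensorProduct.tprod k ![a,b]) =
      PiTensorProduct.tprod k ![1,a,b] - PiTensorProduct.tprod k ![a,1,b] - PiTensorProduct.tprod k ![1,b,a] + PiTensorProduct.tprod k ![b,1,a] := by
  have hs : ∀ g : Fin (1+1) → (Tp k A (1+1) →ₗ[k] Tp k A (1+2)), ∑ i, g i = g 0 + g 1 :=
    fun g => Fin.sum_univ_two g
  simp only [hB, hs, LinearMap.smul_apply, LinearMap.coe_comp, Function.comp_apply,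
    LinearEquiv.coe_coe, LinearMap.sub_apply, PiTensorProduct.reindex_tprod, LinearMap.add_apply]
  rw [show (1 * ((0 : Fin 2) : ℕ)) = 0 from rfl, show (1 * ((1 : Fin 2) : ℕ)) = 1 from rfl,
    pow_zero, one_smul, pow_one, neg_smul, one_smul]
  have h0 : PiTensorProduct.tprod k (fun i => ![a,b] (((finRotate (1+1) ^ ((0:Fin 2):ℕ))⁻¹).symm i)) = PiTensorProduct.tprod k ![a,b] := by
    refine tprod_congr fun i => ?_
    have e : ∀ x : Fin 2, ((finRotate (1+1) ^ ((0:Fin 2):ℕ))⁻¹).symm x = ![(0:Fin 2),1] x := by decide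
    fin_cases i <;> simp [e, Equiv.Perm.one_symm]
  have h1 : PiTensorProduct.tprod k (fun i => ![a,b] (((finRotate (1+1) ^ ((1:Fin 2):ℕ))⁻¹).symm i)) = PiTensorProduct.tprod k ![b,a] := by
    refine tprod_congr fun i => ?_
    have e : ∀ x : Fin 2, ((finRotate (1+1) ^ ((1:Fin 2):ℕ))⁻¹).symm x = ![(1:Fin 2),0] x := by decide
    have e' : ∀ x : Fin 2, (Equiv.symm (finRotate 2)⁻¹) x = ![(1:Fin 2),0] x := by decide
    fin_cases i <;> simp [e, e']
  rw [h0, h1, show (ins0 k A (1+1) : Tp k A 2 →ₗ[k] Tp k A 3) = ins0 k A 2 from rfl,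
    ins0_tprod, ins0_tprod, ins1_1_tprod, ins1_1_tprod,
    show (Fin.cons 1 ![a,b] : Fin 3 → A) = ![(1:A),a,b] from rfl,
    show (Fin.cons 1 ![b,a] : Fin 3 → A) = ![(1:A),b,a] from rfl]
  abel

theorem iC2_tprod (c a b d : A) :
    iC k A c 2 (PiTensorProduct.tprod k ![a,b,d]) = PiTensorProduct.tprod k ![a*c,b,d] := by
  simp only [iC, LinearMap.coe_comp, Function.comp_apply, LinearEquiv.coe_coe,
    toFront_symm_tprod, LinearMap.rTensor_tmul, LinearMap.mulRight_apply, toFront_tprod]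
  exact tprod_congr fun i => by fin_cases i <;> rfl

theorem triple_tprod (a b d : A) :
    triple k A (PiTensorProduct.tprod k ![a,b,d]) = a ⊗ₜ[k] (b ⊗ₜ[k] d) := by
  have ht : (Fin.tail ![a,b,d] : Fin 2 → A) = ![b,d] := by
    funext i; fin_cases i <;> rfl
  have ht2 : (Fin.tail ![b,d] : Fin 1 → A) = ![d] := by
    funext i; fin_cases i <;> rfl
  simp only [triple, LinearEquiv.trans_apply, toFront_symm_tprod,
    TensorProduct.congr_tmul, LinearEquiv.refl_apply, ht]
  congr 1
  simp only [LinearEquiv.trans_apply, toFront_symm_tprod, TensorProduct.congr_tmul,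
    LinearEquiv.refl_apply, ht2, single_tprod]
  rfl

theorem adjCochain_tprod (α : A →ₗ[k] A →ₗ[k] Module.Dual k A) (a b d : A) :
    adjCochain k A α (PiTensorProduct.tprod k ![a,b,d]) = α b d a := by
  simp only [adjCochain, LinearMap.coe_comp, Function.comp_apply, LinearEquiv.coe_coe,
    triple_tprod, TensorProduct.lift.tmul]
  rfl
/-- Suppose `c ∈ Z(A)`, and there are `α' ∈ (A^{⊗3})*`, `h' ∈ A*`,
`β ∈ (A^{⊗2})*` with `b₃*(α') = 0`, `α'∘B₁ + h'∘b₁ = 0` and `α̃ ∘ i_c = α' + β∘b₂`.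
Then with `h := h' + β∘B₀ + α(1⊗1)·c` one has
`α(a⊗b)(c) − α(b⊗a)(c) + h(ab − ba) = 0` for all `a, b ∈ A`. -/
theorem cyclic_lift_implies_symmetry_condition
    (k : Type*) [Field k] (A : Type*) [Ring A] [Algebra k A] [FiniteDimensional k A]
    (α : A →ₗ[k] A →ₗ[k] Module.Dual k A)
    (hα : ∀ a b d x : A, α b d (x * a) - α (a * b) d x + α a (b * d) x - α a b (d * x) = 0)
    (c : A) (hc : ∀ a : A, a * c = c * a)
    (α' : Module.Dual k (Tp k A 3)) (h' : Module.Dual k A) (β : Module.Dual k (Tp k A 2))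
    (h1 : α' ∘ₗ hb k A 2 = 0)
    (h2 : α' ∘ₗ hB k A 1 + ((h' ∘ₗ (single k A).toLinearMap) ∘ₗ hb k A 0) = 0)
    (h3 : adjCochain k A α ∘ₗ iC k A c 2 = α' + β ∘ₗ hb k A 1) :
    ∀ a b : A,
      α a b c - α b a c
        + (h' + β ∘ₗ hB k A 0 ∘ₗ (single k A).symm.toLinearMap
            + (α 1 1) ∘ₗ LinearMap.mulLeft k c) (a * b - b * a) = 0 := by
  intro a b
  have e2 : ∀ u w : A, α u 1 w = α 1 1 (w * u) := by
    intro u w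
    have := hα u 1 1 w
    simp only [mul_one, one_mul] at this
    linear_combination -this
  have e1 : ∀ u v w : A, α 1 v (w * u) = α u 1 (v * w) := by
    intro u v w
    have := hα u 1 v w
    simp only [mul_one, one_mul] at this
    linear_combination this
  have key1 : α 1 b (a * c) = α 1 1 (b * a * c) := by rw [e1 c b a, e2 c (b * a)]
  have key2 : α 1 a (b * c) = α 1 1 (a * b * c) := by rw [e1 c a b, e2 c (a * b)]
  have H2 := LinearMap.congr_fun h2 (PiTensorProduct.tprod k ![a, b])
  simp only [LinearMap.add_apply, LinearMap.coe_comp, Function.comp_apply,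
    LinearEquiv.coe_coe, LinearMap.zero_apply, hB1_tprod, hb0_tprod, map_sub, map_add,
    single_tprod, Matrix.cons_val_zero] at H2
  have H3 : ∀ x y z : A,
      adjCochain k A α (iC k A c 2 (PiTensorProduct.tprod k ![x, y, z]))
        = α' (PiTensorProduct.tprod k ![x, y, z]) + β (hb k A 1 (PiTensorProduct.tprod k ![x, y, z])) := by
    intro x y z
    have := LinearMap.congr_fun h3 (PiTensorProduct.tprod k ![x, y, z])
    simpa using this
  have E1 := H3 1 a b
  rw [iC2_tprod, adjCochain_tprod, hb1_tprod] at E1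
  simp only [one_mul, mul_one, map_add, map_sub] at E1
  have E2 := H3 1 b a
  rw [iC2_tprod, adjCochain_tprod, hb1_tprod] at E2
  simp only [one_mul, mul_one, map_add, map_sub] at E2
  have E3 := H3 a 1 b
  rw [iC2_tprod, adjCochain_tprod, hb1_tprod] at E3
  simp only [one_mul, mul_one, map_add, map_sub] at E3
  have E4 := H3 b 1 a
  rw [iC2_tprod, adjCochain_tprod, hb1_tprod] at E4
  simp only [one_mul, mul_one, map_add, map_sub] at E4
  simp only [LinearMap.add_apply, LinearMap.coe_comp, Function.comp_apply,
    LinearEquiv.coe_coe, single_symm_apply, LinearMap.mulLeft_apply, map_sub, hB0_tprod]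
  rw [← hc (a * b), ← hc (b * a)]
  linear_combination H2 + E1 - E2 - E3 + E4 + key1 - key2

end HochschildScaffold
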